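/- Let X be a real Banach space whose dual X* fails the (−1)-ball covering property. Then SCD(B_X) = ∅. -/

import Mathlib

open Set Metric

variable {X : Type*} [NormedAddCommGroup X] [NormedSpace ℝ X]

/-- A slice of a bounded convex set `A`. -/
def IsSlice (A S : Set X) : Prop :=
  S.Nonempty ∧ ∃ (f : X →L[ℝ] ℝ) (α : ℝ), 0 < α ∧
    S = {x | x ∈ A ∧ sSup (f '' A) - α < f x}

/-- `V` is a determining sequence for the point `a` of `A`. -/
def Determining (A : Set X) (V : ℕ → Set X) (a : X) : Prop :=
  ∀ B ⊆ A, (∀ n, (B ∩ V n).Nonempty) → a ∈ closure (convexHull ℝ B)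

/-- `a` is a slicely countably determined point of `A`. -/
def SCDPoint (A : Set X) (a : X) : Prop :=
  a ∈ A ∧ ∃ V : ℕ → Set X, (∀ n, IsSlice A (V n)) ∧ Determining A V a

/-- A Banach space `Z` fails the `(−1)`-ball covering property. -/
def FailsMinusOneBCP (Z : Type*) [NormedAddCommGroup Z] [NormedSpace ℝ Z] : Prop :=
  ∀ Y : Submodule ℝ Z, IsClosed (Y : Set Z) → TopologicalSpace.IsSeparable (Y : Set Z) →
    ∃ z : Z, ‖z‖ = 1 ∧ ∀ y ∈ Y, ∀ l : ℝ, ‖y + l • z‖ = ‖y‖ + |l|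

/-- For a real functional `g` and any `c < ‖g‖`, there is `x` in the unit ball with `c < g x`. -/
lemma exists_apply_gt (g : X →L[ℝ] ℝ) {c : ℝ} (hc : c < ‖g‖) :
    ∃ x : X, ‖x‖ ≤ 1 ∧ c < g x := by
  obtain ⟨x, hx, hgx⟩ := g.exists_lt_apply_of_lt_opNorm hc
  rw [Real.norm_eq_abs, lt_abs] at hgx
  rcases hgx with h1 | h1
  · exact ⟨x, hx.le, h1⟩
  · exact ⟨-x, by simpa using hx.le, by simpa using h1⟩

/-- Key lemma: if `z` is L-orthogonal to `f`, we can find points in the unit ball almost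
norming `f` while `s * z` is almost `1` on them (`s = ±1`). -/
lemma key_lemma {z f : StrongDual ℝ X} (hz : ‖z‖ = 1)
    (hzf : ∀ l : ℝ, ‖f + l • z‖ = ‖f‖ + |l|) {s α ε : ℝ}
    (hs : |s| = 1) (hα : 0 < α) (hε : 0 < ε) :
    ∃ x : X, ‖x‖ ≤ 1 ∧ ‖f‖ - α < f x ∧ 1 - ε < s * z x := by
  set δ : ℝ := α / 2 with hδdef
  set M : ℝ := δ / ε + 1 with hMdef
  have hδ : 0 < δ := by positivity
  have hM : 0 < M := by positivity
  have hδM : δ < ε * M := by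
    have h1 : ε * (δ / ε) = δ := by field_simp
    have : ε * M = δ + ε := by rw [hMdef, mul_add, mul_one, h1]
    rw [this]; linarith
  have hnorm : ‖f + (s * M) • z‖ = ‖f‖ + M := by
    rw [hzf, abs_mul, hs, one_mul, abs_of_pos hM]
  obtain ⟨x, hx1, hgx⟩ := exists_apply_gt (f + (s * M) • z) (c := ‖f‖ + M - δ)
    (by rw [hnorm]; linarith)
  have happ : (f + (s * M) • z) x = f x + (s * M) * z x := by
    simp [ContinuousLinearMap.add_apply, ContinuousLinearMap.smul_apply, smul_eq_mul]
  rw [happ] at hgx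
  have hzx : |z x| ≤ 1 := by
    have := z.le_opNorm x
    rw [Real.norm_eq_abs, hz, one_mul] at this
    exact this.trans hx1
  have hfxabs : |f x| ≤ ‖f‖ := by
    have := f.le_opNorm x
    rw [Real.norm_eq_abs] at this
    calc |f x| ≤ ‖f‖ * ‖x‖ := this
      _ ≤ ‖f‖ * 1 := by
          exact mul_le_mul_of_nonneg_left hx1 (norm_nonneg f)
      _ = ‖f‖ := mul_one _
  have hfx_le : f x ≤ ‖f‖ := (le_abs_self _).trans hfxabs
  have hszx_le : s * z x ≤ 1 := by
    calc s * z x ≤ |s * z x| := le_abs_self _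
      _ = |s| * |z x| := abs_mul _ _
      _ = |z x| := by rw [hs, one_mul]
      _ ≤ 1 := hzx
  refine ⟨x, hx1, ?_, ?_⟩
  · -- f x > ‖f‖ - α
    have : (s * M) * z x ≤ M := by
      calc (s * M) * z x = M * (s * z x) := by ring
        _ ≤ M * 1 := mul_le_mul_of_nonneg_left hszx_le hM.le
        _ = M := mul_one _
    have : ‖f‖ - δ < f x := by linarith
    have hδα : δ < α := by rw [hδdef]; linarith
    linarith
  · -- 1 - ε < s * z x
    have h1 : M * (s * z x) > M - δ := by
      have : (s * M) * z x = M * (s * z x) := by ring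
      linarith [hgx, hfx_le, this ▸ (by linarith [hgx, hfx_le] : (s * M) * z x > M - δ)]
    nlinarith [h1, hδM, hM]

/-- if the dual of `X` fails the `(−1)`-ball covering property, then the
closed unit ball of `X` has no SCD points. -/
theorem stmt9 {X : Type*} [NormedAddCommGroup X] [NormedSpace ℝ X] [CompleteSpace X]
    (h : FailsMinusOneBCP (StrongDual ℝ X)) :
    {a | SCDPoint (Metric.closedBall (0 : X) 1) a} = ∅ := by
  ext a
  simp only [mem_setOf_eq, mem_empty_iff_false, iff_false]
  rintro ⟨haA, V, hV, hdet⟩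
  choose hne f α hα hVeq using hV
  set Y : Submodule ℝ (StrongDual ℝ X) :=
    (Submodule.span ℝ (Set.range f)).topologicalClosure with hYdef
  have hYsep : TopologicalSpace.IsSeparable (Y : Set (StrongDual ℝ X)) := by
    have h1 : (Set.range f).Countable := Set.countable_range f
    have h2 := h1.isSeparable.span (R := ℝ)
    exact h2.closure
  obtain ⟨z, hz, hzY⟩ := h Y (Submodule.isClosed_topologicalClosure _) hYsep
  have hfY : ∀ n, ∀ l : ℝ, ‖f n + l • z‖ = ‖f n‖ + |l| := by
    intro n l
    exact hzY (f n) (Submodule.le_topologicalClosure _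
      (Submodule.subset_span (Set.mem_range_self n))) l
  have main : ∀ s : ℝ, |s| = 1 → 1 ≤ s * z a := by
    intro s hs
    have hkey : ∀ ε > (0:ℝ), 1 - ε ≤ s * z a := by
      intro ε hε
      set B : Set X := {x : X | x ∈ closedBall (0 : X) 1 ∧ 1 - ε < s * z x} with hBdef
      have hBA : B ⊆ closedBall (0 : X) 1 := fun x hx => hx.1
      have hmem : a ∈ closure (convexHull ℝ B) := by
        apply hdet B hBA
        intro n
        obtain ⟨x, hx1, hfx, hzx⟩ := key_lemma hz (hfY n) hs (hα n) hε
        have hxball : x ∈ closedBall (0 : X) 1 := by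
          simpa [mem_closedBall, dist_eq_norm] using hx1
        refine ⟨x, ⟨hxball, hzx⟩, ?_⟩
        rw [hVeq n]
        refine ⟨hxball, ?_⟩
        have hsup : sSup (f n '' closedBall (0 : X) 1) ≤ ‖f n‖ := by
          apply Real.sSup_le
          · rintro y ⟨u, hu, rfl⟩
            have hu1 : ‖u‖ ≤ 1 := by simpa [mem_closedBall, dist_eq_norm] using hu
            have := (f n).le_opNorm u
            rw [Real.norm_eq_abs] at this
            calc f n u ≤ |f n u| := le_abs_self _
              _ ≤ ‖f n‖ * ‖u‖ := this
              _ ≤ ‖f n‖ * 1 := mul_le_mul_of_nonneg_left hu1 (norm_nonneg _)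
              _ = ‖f n‖ := mul_one _
          · exact norm_nonneg _
        linarith
      have hC : closure (convexHull ℝ B) ⊆ {x : X | 1 - ε ≤ (s • z) x} := by
        apply closure_minimal
        · apply convexHull_min
          · intro x hx
            simpa [ContinuousLinearMap.smul_apply, smul_eq_mul] using hx.2.le
          · exact convex_halfSpace_ge ⟨fun a b => by simp [mul_add], fun c a => by simp [smul_eq_mul]⟩ (1 - ε)
        · exact isClosed_le continuous_const (s • z).continuous
      have := hC hmem
      simpa [ContinuousLinearMap.smul_apply, smul_eq_mul] using this
    by_contra hlt
    push_neg at hlt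
    have := hkey ((1 - s * z a) / 2) (by linarith)
    linarith
  have h1 := main 1 (by norm_num)
  have h2 := main (-1) (by norm_num)
  linarith
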